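/- Every graph whose edge set can be covered by 2 shortest paths has pathwidth at most 2. -/

import Mathlib

/-- A path-decomposition of `G`. -/
def IsPathDecomp {V : Type*} (G : SimpleGraph V) (B : ℕ → Set V) : Prop :=
  (∀ v : V, ∃ i, v ∈ B i) ∧
  (∀ ⦃u v : V⦄, G.Adj u v → ∃ i, u ∈ B i ∧ v ∈ B i) ∧
  (∀ (v : V) (i j k : ℕ), i ≤ j → j ≤ k → v ∈ B i → v ∈ B k → v ∈ B j)

/-- The pathwidth of `G`. -/
noncomputable def pathwidth {V : Type*} (G : SimpleGraph V) : ℕ∞ :=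
  sInf {w : ℕ∞ | ∃ B : ℕ → Set V, IsPathDecomp G B ∧ ∀ i, (B i).encard ≤ w + 1}

set_option linter.unnecessarySeqFocus false

open SimpleGraph

section helpers
variable {V : Type*} {G : SimpleGraph V} {a b : V}

lemma walk_edges_getVert {V : Type*} {G : SimpleGraph V} {a b : V} (w : G.Walk a b) :
    ∀ e ∈ w.edges, ∃ i < w.length, e = s(w.getVert i, w.getVert (i+1)) := by
  induction w with
  | nil => simp
  | cons h t ih =>
    intro e he
    rw [Walk.edges_cons, List.mem_cons] at he
    rcases he with he | he
    · exact ⟨0, by simp, by simpa [Walk.getVert_zero, Walk.getVert_cons_succ] using he⟩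
    · obtain ⟨i, hi, hee⟩ := ih e he
      exact ⟨i + 1, by simpa using Nat.succ_lt_succ hi, by
        simpa [Walk.getVert_cons_succ] using hee⟩

lemma isPath_getVert_inj {V : Type*} {G : SimpleGraph V} {a b : V} {w : G.Walk a b}
    (hw : w.IsPath) : ∀ i j, i ≤ w.length → j ≤ w.length → w.getVert i = w.getVert j → i = j := by
  induction w with
  | nil => intro i j hi hj _; simp at hi hj; omega
  | cons h t ih =>
    rw [Walk.cons_isPath_iff] at hw
    intro i j hi hj hgv
    match i, j with
    | 0, 0 => rfl
    | 0, j + 1 =>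
      exfalso
      rw [Walk.getVert_zero, Walk.getVert_cons_succ] at hgv
      exact hw.2 (Walk.mem_support_iff_exists_getVert.mpr ⟨j, hgv.symm, by
        simpa using Nat.le_of_succ_le_succ hj⟩)
    | i + 1, 0 =>
      exfalso
      rw [Walk.getVert_zero, Walk.getVert_cons_succ] at hgv
      exact hw.2 (Walk.mem_support_iff_exists_getVert.mpr ⟨i, hgv, by
        simpa using Nat.le_of_succ_le_succ hi⟩)
    | i + 1, j + 1 =>
      rw [Walk.getVert_cons_succ, Walk.getVert_cons_succ] at hgv
      simp only [Walk.length_cons] at hi hj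
      exact congrArg Nat.succ (ih hw.1 i j (by omega) (by omega) hgv)

lemma edist_getVert_le {V : Type*} {G : SimpleGraph V} {a b : V} (w : G.Walk a b) :
    ∀ i j, i ≤ j → j ≤ w.length → G.edist (w.getVert i) (w.getVert j) ≤ (j - i : ℕ) := by
  intro i j hij hj
  induction j with
  | zero => simp [show i = 0 by omega]
  | succ j ih =>
    rcases Nat.eq_or_lt_of_le hij with rfl | hlt
    · simp
    · have h1 : G.edist (w.getVert i) (w.getVert j) ≤ (j - i : ℕ) := ih (by omega) (by omega)
      have h2 : G.edist (w.getVert j) (w.getVert (j+1)) ≤ 1 := by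
        have := w.adj_getVert_succ (i := j) (by omega)
        rw [← SimpleGraph.edist_eq_one_iff_adj] at this
        exact this.le
      calc G.edist (w.getVert i) (w.getVert (j+1))
          ≤ G.edist (w.getVert i) (w.getVert j) + G.edist (w.getVert j) (w.getVert (j+1)) :=
            SimpleGraph.edist_triangle
        _ ≤ (j - i : ℕ) + 1 := add_le_add h1 h2
        _ = ((j + 1 - i : ℕ) : ℕ∞) := by push_cast [Nat.succ_sub (by omega : i ≤ j)]; ring

/-- On a shortest path, the extended distance between vertices equals index difference. -/
lemma edist_getVert_shortest (w : G.Walk a b) (hw : w.length = G.dist a b) :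
    ∀ i j, i ≤ j → j ≤ w.length → G.edist (w.getVert i) (w.getVert j) = ((j - i : ℕ) : ℕ∞) := by
  intro i j hij hj
  have hub := edist_getVert_le w i j hij hj
  -- total edist equals length
  have htop : G.edist a b ≤ (w.length : ℕ∞) := edist_le w
  have hne : G.edist a b ≠ ⊤ := (htop.trans_lt (by exact_mod_cast ENat.coe_lt_top _)).ne
  have htot : G.edist a b = (w.length : ℕ∞) := by
    rw [hw]
    unfold SimpleGraph.dist
    rw [ENat.coe_toNat hne]
  obtain ⟨k, hk, hke⟩ : ∃ k : ℕ, k ≤ j - i ∧ G.edist (w.getVert i) (w.getVert j) = (k : ℕ∞) := by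
    have hne' : G.edist (w.getVert i) (w.getVert j) ≠ ⊤ :=
      (hub.trans_lt (by exact_mod_cast ENat.coe_lt_top _)).ne
    refine ⟨(G.edist (w.getVert i) (w.getVert j)).toNat, ?_, (ENat.coe_toNat hne').symm⟩
    have := ENat.coe_toNat hne' ▸ hub
    exact_mod_cast this
  rw [hke]
  have h0 : G.edist a (w.getVert i) ≤ (i : ℕ∞) := by
    have := edist_getVert_le w 0 i (Nat.zero_le _) (le_trans hij hj)
    simpa [Walk.getVert_zero] using this
  have h2 : G.edist (w.getVert j) b ≤ ((w.length - j : ℕ) : ℕ∞) := by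
    have := edist_getVert_le w j w.length hj le_rfl
    simpa [Walk.getVert_length] using this
  have htri : G.edist a b ≤ G.edist a (w.getVert i) + G.edist (w.getVert i) (w.getVert j) +
      G.edist (w.getVert j) b :=
    le_trans SimpleGraph.edist_triangle (by
      exact add_le_add SimpleGraph.edist_triangle le_rfl)
  rw [htot, hke] at htri
  have hfin : (w.length : ℕ∞) ≤ ((i + k + (w.length - j) : ℕ) : ℕ∞) := by
    refine htri.trans ?_
    push_cast
    exact add_le_add (add_le_add h0 le_rfl) h2
  have : w.length ≤ i + k + (w.length - j) := by exact_mod_cast hfin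
  have : k = j - i := by omega
  rw [this]


end helpers

lemma pathwidth_le_two_aux {V : Type*} [Finite V] (G : SimpleGraph V)
    (u v : ℕ → V) (p q : ℕ) (c : ℤ)
    (hu : ∀ i i', i ≤ p → i' ≤ p → u i = u i' → i = i')
    (hv : ∀ j j', j ≤ q → j' ≤ q → v j = v j' → j = j')
    (hcov : ∀ x y, G.Adj x y → (∃ i, i < p ∧ s(x,y) = s(u i, u (i+1))) ∨
      (∃ j, j < q ∧ s(x,y) = s(v j, v (j+1))))
    (halign : ∀ i j, i ≤ p → j ≤ q → u i = v j → (j:ℤ) = (i:ℤ) + c) :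
    pathwidth G ≤ 2 := by
  classical
  obtain ⟨f, hf⟩ := exists_injective_nat V
  set s : ℤ := 2*(c.natAbs : ℤ) + 2 with hs
  set M : ℕ := 2*p + 2*q + 8*c.natAbs + 20 with hM
  set PV : Set V := {x | (∃ i, i ≤ p ∧ x = u i) ∨ (∃ j, j ≤ q ∧ x = v j)} with hPV
  set B : ℕ → Set V := fun n => {x |
      (∃ i, i ≤ p ∧ x = u i ∧ s + 2*i ≤ (n:ℤ) ∧ (n:ℤ) ≤ s + 2*i + 2) ∨
      (∃ j, j ≤ q ∧ x = v j ∧ s + 2*((j:ℤ)-c) + 1 ≤ (n:ℤ) ∧ (n:ℤ) ≤ s + 2*((j:ℤ)-c) + 3) ∨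
      (x ∉ PV ∧ n = M + f x)} with hB
  have hmemB : ∀ (x : V) (n : ℕ), x ∈ B n ↔
      (∃ i, i ≤ p ∧ x = u i ∧ s + 2*i ≤ (n:ℤ) ∧ (n:ℤ) ≤ s + 2*i + 2) ∨
      (∃ j, j ≤ q ∧ x = v j ∧ s + 2*((j:ℤ)-c) + 1 ≤ (n:ℤ) ∧ (n:ℤ) ≤ s + 2*((j:ℤ)-c) + 3) ∨
      (x ∉ PV ∧ n = M + f x) := fun x n => Iff.rfl
  have hsnn : 0 ≤ s := by positivity
  -- (1) every vertex in some bag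
  have hvert : ∀ x : V, ∃ n, x ∈ B n := by
    intro x
    by_cases hx : x ∈ PV
    · rcases hx with ⟨i, hi, rfl⟩ | ⟨j, hj, rfl⟩
      · refine ⟨(s + 2*i).toNat, (hmemB _ _).mpr (Or.inl ⟨i, hi, rfl, ?_, ?_⟩)⟩ <;>
          rw [Int.toNat_of_nonneg (by omega)] <;> omega
      · refine ⟨(s + 2*((j:ℤ)-c) + 1).toNat, (hmemB _ _).mpr
          (Or.inr (Or.inl ⟨j, hj, rfl, ?_, ?_⟩))⟩ <;>
          rw [Int.toNat_of_nonneg (by omega)] <;> omega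
    · exact ⟨M + f x, (hmemB _ _).mpr (Or.inr (Or.inr ⟨hx, rfl⟩))⟩
  -- (2) every edge in some bag
  have hedge : ∀ ⦃x y : V⦄, G.Adj x y → ∃ n, x ∈ B n ∧ y ∈ B n := by
    intro x y hadj
    rcases hcov x y hadj with ⟨i, hi, he⟩ | ⟨j, hj, he⟩
    · rw [Sym2.eq_iff] at he
      refine ⟨(s + 2*i + 2).toNat, ?_⟩
      have hnn : (((s + 2*i + 2).toNat : ℤ)) = s + 2*i + 2 := Int.toNat_of_nonneg (by omega)
      have m1 : u i ∈ B ((s + 2*i + 2).toNat) :=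
        (hmemB _ _).mpr (Or.inl ⟨i, by omega, rfl, by omega, by omega⟩)
      have m2 : u (i+1) ∈ B ((s + 2*i + 2).toNat) :=
        (hmemB _ _).mpr (Or.inl ⟨i+1, by omega, rfl, by push_cast; omega, by push_cast; omega⟩)
      rcases he with ⟨hx, hy⟩ | ⟨hx, hy⟩ <;> subst hx <;> subst hy <;> exact ⟨by assumption, by assumption⟩
    · rw [Sym2.eq_iff] at he
      refine ⟨(s + 2*((j:ℤ)-c) + 3).toNat, ?_⟩
      have hnn : (((s + 2*((j:ℤ)-c) + 3).toNat : ℤ)) = s + 2*((j:ℤ)-c) + 3 :=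
        Int.toNat_of_nonneg (by omega)
      have m1 : v j ∈ B ((s + 2*((j:ℤ)-c) + 3).toNat) :=
        (hmemB _ _).mpr (Or.inr (Or.inl ⟨j, by omega, rfl, by omega, by omega⟩))
      have m2 : v (j+1) ∈ B ((s + 2*((j:ℤ)-c) + 3).toNat) :=
        (hmemB _ _).mpr (Or.inr (Or.inl ⟨j+1, by omega, rfl, by push_cast; omega,
          by push_cast; omega⟩))
      rcases he with ⟨hx, hy⟩ | ⟨hx, hy⟩ <;> subst hx <;> subst hy <;> exact ⟨by assumption, by assumption⟩
  -- (3) connectivity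
  have hconn : ∀ (x : V) (n₁ n₂ n₃ : ℕ), n₁ ≤ n₂ → n₂ ≤ n₃ → x ∈ B n₁ → x ∈ B n₃ → x ∈ B n₂ := by
    intro x n₁ n₂ n₃ h12 h23 hx1 hx3
    rw [hmemB] at hx1 hx3 ⊢
    rcases hx1 with ⟨i, hi, rfl, hl1, hr1⟩ | ⟨j, hj, rfl, hl1, hr1⟩ | ⟨hnPV, hn1⟩
    · rcases hx3 with ⟨i', hi', hei, hl3, hr3⟩ | ⟨j', hj', hej, hl3, hr3⟩ | ⟨hnPV, -⟩
      · have : i = i' := hu i i' hi hi' hei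
        subst this
        exact Or.inl ⟨i, hi, rfl, by omega, by omega⟩
      · have hc : (j':ℤ) = (i:ℤ) + c := halign i j' hi hj' hej
        by_cases h : (n₂:ℤ) ≤ s + 2*i + 2
        · exact Or.inl ⟨i, hi, rfl, by omega, h⟩
        · exact Or.inr (Or.inl ⟨j', hj', hej, by omega, by omega⟩)
      · exact absurd (Or.inl ⟨i, hi, rfl⟩) hnPV
    · rcases hx3 with ⟨i', hi', hei, hl3, hr3⟩ | ⟨j', hj', hej, hl3, hr3⟩ | ⟨hnPV, -⟩
      · have hc : (j:ℤ) = (i':ℤ) + c := halign i' j hi' hj hei.symm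
        by_cases h : s + 2*i' ≤ (n₂:ℤ)
        · exact Or.inl ⟨i', hi', hei, h, by omega⟩
        · exact Or.inr (Or.inl ⟨j, hj, rfl, by omega, by omega⟩)
      · have : j = j' := hv j j' hj hj' hej
        subst this
        exact Or.inr (Or.inl ⟨j, hj, rfl, by omega, by omega⟩)
      · exact absurd (Or.inr ⟨j, hj, rfl⟩) hnPV
    · rcases hx3 with ⟨i', hi', hei, hl3, hr3⟩ | ⟨j', hj', hej, hl3, hr3⟩ | ⟨-, hn3⟩
      · exact absurd (Or.inl ⟨i', hi', hei⟩) hnPV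
      · exact absurd (Or.inr ⟨j', hj', hej⟩) hnPV
      · exact Or.inr (Or.inr ⟨hnPV, by omega⟩)
  -- subsingleton helpers
  have husub : ∀ k : ℤ, ({x | ∃ i, i ≤ p ∧ x = u i ∧ 2*(i:ℤ) = k} : Set V).encard ≤ 1 := by
    intro k
    rw [Set.encard_le_one_iff]
    rintro a b ⟨i, -, rfl, hik⟩ ⟨i', -, rfl, hik'⟩
    have : i = i' := by omega
    rw [this]
  have hvsub : ∀ k : ℤ, ({x | ∃ j, j ≤ q ∧ x = v j ∧ 2*((j:ℤ)-c) = k} : Set V).encard ≤ 1 := by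
    intro k
    rw [Set.encard_le_one_iff]
    rintro a b ⟨j, -, rfl, hjk⟩ ⟨j', -, rfl, hjk'⟩
    have : j = j' := by omega
    rw [this]
  -- (4) bag sizes
  have hsize : ∀ n, (B n).encard ≤ 2 + 1 := by
    intro n
    have h3 : ((2:ℕ∞) + 1) = 3 := by norm_num
    rw [h3]
    by_cases hn : n < M
    · rcases Int.even_or_odd ((n:ℤ) - s) with ⟨t, ht⟩ | ⟨t, ht⟩
      · have hss : B n ⊆ {x | ∃ i, i ≤ p ∧ x = u i ∧ 2*(i:ℤ) = (n:ℤ) - s} ∪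
            ({x | ∃ i, i ≤ p ∧ x = u i ∧ 2*(i:ℤ) = (n:ℤ) - s - 2} ∪
             {x | ∃ j, j ≤ q ∧ x = v j ∧ 2*((j:ℤ)-c) = (n:ℤ) - s - 2}) := by
          intro x hx
          rcases (hmemB x n).mp hx with ⟨i, hi, rfl, hl, hr⟩ | ⟨j, hj, rfl, hl, hr⟩ | ⟨-, hn'⟩
          · have : 2*(i:ℤ) = (n:ℤ) - s ∨ 2*(i:ℤ) = (n:ℤ) - s - 2 := by omega
            rcases this with h | h
            · exact Or.inl ⟨i, hi, rfl, h⟩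
            · exact Or.inr (Or.inl ⟨i, hi, rfl, h⟩)
          · have h : 2*((j:ℤ)-c) = (n:ℤ) - s - 2 := by omega
            exact Or.inr (Or.inr ⟨j, hj, rfl, h⟩)
          · omega
        calc (B n).encard ≤ _ := Set.encard_mono hss
          _ ≤ _ + _ := Set.encard_union_le _ _
          _ ≤ 1 + (1 + 1) := by
              gcongr
              · exact husub _
              · calc _ ≤ _ + _ := Set.encard_union_le _ _
                  _ ≤ 1 + 1 := by gcongr; exacts [husub _, hvsub _]
          _ = 3 := by norm_num
      · have hss : B n ⊆ {x | ∃ i, i ≤ p ∧ x = u i ∧ 2*(i:ℤ) = (n:ℤ) - s - 1} ∪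
            ({x | ∃ j, j ≤ q ∧ x = v j ∧ 2*((j:ℤ)-c) = (n:ℤ) - s - 1} ∪
             {x | ∃ j, j ≤ q ∧ x = v j ∧ 2*((j:ℤ)-c) = (n:ℤ) - s - 3}) := by
          intro x hx
          rcases (hmemB x n).mp hx with ⟨i, hi, rfl, hl, hr⟩ | ⟨j, hj, rfl, hl, hr⟩ | ⟨-, hn'⟩
          · have h : 2*(i:ℤ) = (n:ℤ) - s - 1 := by omega
            exact Or.inl ⟨i, hi, rfl, h⟩
          · have : 2*((j:ℤ)-c) = (n:ℤ) - s - 1 ∨ 2*((j:ℤ)-c) = (n:ℤ) - s - 3 := by omega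
            rcases this with h | h
            · exact Or.inr (Or.inl ⟨j, hj, rfl, h⟩)
            · exact Or.inr (Or.inr ⟨j, hj, rfl, h⟩)
          · omega
        calc (B n).encard ≤ _ := Set.encard_mono hss
          _ ≤ _ + _ := Set.encard_union_le _ _
          _ ≤ 1 + (1 + 1) := by
              gcongr
              · exact husub _
              · calc _ ≤ _ + _ := Set.encard_union_le _ _
                  _ ≤ 1 + 1 := by gcongr; exacts [hvsub _, hvsub _]
          _ = 3 := by norm_num
    · have hss : B n ⊆ {x | x ∉ PV ∧ n = M + f x} := by
        intro x hx
        rcases (hmemB x n).mp hx with ⟨i, hi, rfl, hl, hr⟩ | ⟨j, hj, rfl, hl, hr⟩ | h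
        · omega
        · omega
        · exact h
      have h1 : ({x | x ∉ PV ∧ n = M + f x} : Set V).encard ≤ 1 := by
        rw [Set.encard_le_one_iff]
        rintro a b ⟨-, ha⟩ ⟨-, hb⟩
        exact hf (by omega)
      calc (B n).encard ≤ _ := Set.encard_mono hss
        _ ≤ 1 := h1
        _ ≤ 3 := by norm_num
  exact sInf_le ⟨B, ⟨hvert, hedge, hconn⟩, hsize⟩

/-- Every graph whose edge set can be covered by two shortest paths has
pathwidth at most `2`. -/
theorem pathwidth_le_two_of_two_shortest_paths {V : Type*} [Finite V]
    (G : SimpleGraph V) {a₁ b₁ a₂ b₂ : V}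
    (P₁ : G.Walk a₁ b₁) (P₂ : G.Walk a₂ b₂)
    (h₁ : P₁.IsPath) (h₂ : P₂.IsPath)
    (h₁s : P₁.length = G.dist a₁ b₁) (h₂s : P₂.length = G.dist a₂ b₂)
    (hcov : ∀ e ∈ G.edgeSet, e ∈ P₁.edges ∨ e ∈ P₂.edges) :
    pathwidth G ≤ 2 := by
  classical
  set u : ℕ → V := P₁.getVert with hu_def
  set v : ℕ → V := P₂.getVert with hv_def
  set p : ℕ := P₁.length with hp_def
  set q : ℕ := P₂.length with hq_def
  have hu : ∀ i i', i ≤ p → i' ≤ p → u i = u i' → i = i' := fun i i' hi hi' =>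
    isPath_getVert_inj h₁ i i' hi hi'
  have hv : ∀ j j', j ≤ q → j' ≤ q → v j = v j' → j = j' := fun j j' hj hj' =>
    isPath_getVert_inj h₂ j j' hj hj'
  have hcovA : ∀ x y : V, G.Adj x y → (∃ i, i < p ∧ s(x,y) = s(u i, u (i+1))) ∨
      (∃ j, j < q ∧ s(x,y) = s(v j, v (j+1))) := by
    intro x y hadj
    rcases hcov s(x,y) (G.mem_edgeSet.mpr hadj) with h | h
    · obtain ⟨i, hi, he⟩ := walk_edges_getVert P₁ _ h
      exact Or.inl ⟨i, hi, he⟩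
    · obtain ⟨j, hj, he⟩ := walk_edges_getVert P₂ _ h
      exact Or.inr ⟨j, hj, he⟩
  have hdu := edist_getVert_shortest P₁ h₁s
  have hdv := edist_getVert_shortest P₂ h₂s
  -- key: common vertices are at matching distances
  have hkey : ∀ i j i' j', i ≤ p → j ≤ q → u i = v j → i' ≤ p → j' ≤ q → u i' = v j' →
      (j':ℤ) - j = (i':ℤ) - i ∨ (j':ℤ) - j = -((i':ℤ) - i) := by
    have core : ∀ i j i' j', i ≤ p → j ≤ q → u i = v j → i' ≤ p → j' ≤ q → u i' = v j' →
        i ≤ i' → (j':ℤ) - j = (i':ℤ) - i ∨ (j':ℤ) - j = -((i':ℤ) - i) := by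
      intro i j i' j' hi hj he hi' hj' he' hii
      have h1 : G.edist (u i) (u i') = ((i' - i : ℕ) : ℕ∞) := hdu i i' hii hi'
      have h2 : G.edist (v j) (v j') = G.edist (u i) (u i') := by rw [he, he']
      rcases le_total j j' with hjj | hjj
      · have h3 : G.edist (v j) (v j') = ((j' - j : ℕ) : ℕ∞) := hdv j j' hjj hj'
        have : ((j' - j : ℕ) : ℕ∞) = ((i' - i : ℕ) : ℕ∞) := by rw [← h3, h2, h1]
        have : (j' - j : ℕ) = (i' - i : ℕ) := by exact_mod_cast this
        omega
      · have h3 : G.edist (v j') (v j) = ((j - j' : ℕ) : ℕ∞) := hdv j' j hjj hj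
        have h4 : G.edist (v j) (v j') = ((j - j' : ℕ) : ℕ∞) := by
          rw [SimpleGraph.edist_comm]; exact h3
        have : ((j - j' : ℕ) : ℕ∞) = ((i' - i : ℕ) : ℕ∞) := by rw [← h4, h2, h1]
        have : (j - j' : ℕ) = (i' - i : ℕ) := by exact_mod_cast this
        omega
    intro i j i' j' hi hj he hi' hj' he'
    rcases le_total i i' with hii | hii
    · exact core i j i' j' hi hj he hi' hj' he' hii
    · rcases core i' j' i j hi' hj' he' hi hj he hii with h | h
      · left; omega
      · right; omega
  by_cases hex : ∃ i j, i ≤ p ∧ j ≤ q ∧ u i = v j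
  · obtain ⟨i₀, j₀, hi₀, hj₀, he₀⟩ := hex
    by_cases hplus : ∀ i j, i ≤ p → j ≤ q → u i = v j → (j:ℤ) - j₀ = (i:ℤ) - i₀
    · refine pathwidth_le_two_aux G u v p q ((j₀:ℤ) - i₀) hu hv hcovA ?_
      intro i j hi hj he
      have := hplus i j hi hj he
      omega
    · push_neg at hplus
      obtain ⟨iW, jW, hiW, hjW, heW, hneW⟩ := hplus
      have hW : (jW:ℤ) - j₀ = -((iW:ℤ) - i₀) ∧ (iW:ℤ) ≠ i₀ := by
        rcases hkey i₀ j₀ iW jW hi₀ hj₀ he₀ hiW hjW heW with h | h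
        · exact absurd h hneW
        · exact ⟨h, fun hc => hneW (by omega)⟩
      have hminus : ∀ i j, i ≤ p → j ≤ q → u i = v j → (j:ℤ) - j₀ = -((i:ℤ) - i₀) := by
        intro i j hi hj he
        rcases hkey i₀ j₀ i j hi₀ hj₀ he₀ hi hj he with h | h
        · rcases hkey iW jW i j hiW hjW heW hi hj he with h' | h'
          · omega
          · omega
        · exact h
      -- use the reversed second indexing
      refine pathwidth_le_two_aux G u (fun j => v (q - j)) p q ((q:ℤ) - (j₀:ℤ) - (i₀:ℤ)) hu ?_ ?_ ?_
      · intro j j' hj hj' he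
        have := hv (q - j) (q - j') (by omega) (by omega) he
        omega
      · intro x y hadj
        rcases hcovA x y hadj with h | ⟨j, hj, he⟩
        · exact Or.inl h
        · refine Or.inr ⟨q - 1 - j, by omega, ?_⟩
          have e1 : q - (q - 1 - j) = j + 1 := by omega
          have e2 : q - (q - 1 - j + 1) = j := by omega
          show s(x,y) = s(v (q - (q - 1 - j)), v (q - (q - 1 - j + 1)))
          rw [e1, e2, he, Sym2.eq_swap]
      · intro i j' hi hj' he
        have hm := hminus i (q - j') hi (by omega) he
        have hq' : ((q - j' : ℕ) : ℤ) = (q:ℤ) - j' := by omega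
        omega
  · refine pathwidth_le_two_aux G u v p q 0 hu hv hcovA ?_
    intro i j hi hj he
    exact absurd ⟨i, j, hi, hj, he⟩ hex
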